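/- Let ℓ be an odd prime and r ≥ 1 an integer. For each prime q ≠ ℓ let g_q be the multiplicative order of q^r modulo ℓ, and set μ_q = ℓ if g_q = 1 and μ_q = g_q otherwise. Then for every real s > 1, ∑_{n ≥ 1, ℓ ∤ σ_r(n)} n^{−s} = (1 − ℓ^{−s})^{−1} · ∏_{q prime, q ≠ ℓ} (1 − q^{−(μ_q−1)s}) / ((1 − q^{−s})·(1 − q^{−μ_q s})), the series and the infinite product over primes q ≠ ℓ both converging. -/

import Mathlib

set_option maxHeartbeats 1000000

/-- `mySigma m n = ∑_{d ∣ n} d^m`, the sum of `m`-th powers of the divisors of `n`. -/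
def mySigma (m n : ℕ) : ℕ := ∑ d ∈ n.divisors, d ^ m

/-- `mu ℓ r q` equals `ℓ` if the multiplicative order of `q^r` modulo `ℓ` is `1`,
and equals that multiplicative order otherwise. -/
noncomputable def mu (ℓ r q : ℕ) : ℕ :=
  if orderOf ((q : ZMod ℓ) ^ r) = 1 then ℓ else orderOf ((q : ZMod ℓ) ^ r)

lemma lemD (x : ℝ) (hx0 : 0 < x) (hx1 : x < 1) (ν : ℕ) :
    ∑' e : ℕ, (if (ν+1) ∣ (e+1) then (0:ℝ) else x^e) =
      (1 - x^ν) / ((1-x) * (1 - x^(ν+1))) := by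
  set μ := ν + 1 with hμdef
  have hxμ0 : (0:ℝ) ≤ x ^ μ := by positivity
  have hxμ1 : x ^ μ < 1 := pow_lt_one₀ hx0.le hx1 (by omega)
  set g : ℕ → ℝ := fun n => if μ ∣ n then x^n else 0 with hg
  have hgsum : Summable g := by
    apply Summable.of_nonneg_of_le (fun n => ?_) (fun n => ?_)
      (summable_geometric_of_lt_one hx0.le hx1)
    · simp only [hg]; positivity
    · simp only [hg]; split <;> simp [pow_nonneg hx0.le]
  have hS1 : ∑' n, g n = (1 - x^μ)⁻¹ := by
    have hinj : Function.Injective (fun k : ℕ => μ * k) := fun a b h => by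
      simpa [hμdef] using h
    have hsupp : Function.support g ⊆ Set.range (fun k : ℕ => μ * k) := by
      intro n hn
      simp only [hg, Function.mem_support, ne_eq, ite_eq_right_iff, not_forall] at hn
      obtain ⟨⟨k, rfl⟩, -⟩ := hn
      exact ⟨k, rfl⟩
    rw [← hinj.tsum_eq hsupp]
    have : ∀ k : ℕ, g (μ * k) = (x^μ)^k := by
      intro k; simp only [hg, if_pos (Dvd.intro k rfl), pow_mul]
    simp only [this]
    exact tsum_geometric_of_lt_one hxμ0 hxμ1
  have hS2 : ∑' e : ℕ, g (e+1) = (1 - x^μ)⁻¹ - 1 := by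
    have := Summable.tsum_eq_zero_add hgsum
    have hg0 : g 0 = 1 := by simp [hg]
    rw [hS1, hg0] at this
    linarith
  have key : ∀ e : ℕ, (if μ ∣ (e+1) then (0:ℝ) else x^e) = x^e - x⁻¹ * g (e+1) := by
    intro e
    simp only [hg]
    split
    · rw [pow_succ]; field_simp; ring
    · ring
  rw [tsum_congr key]
  have hsx : Summable (fun e : ℕ => x ^ e) := summable_geometric_of_lt_one hx0.le hx1
  have hsg : Summable (fun e : ℕ => x⁻¹ * g (e+1)) :=
    ((summable_nat_add_iff 1).mpr hgsum).mul_left _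
  rw [Summable.tsum_sub hsx hsg, tsum_geometric_of_lt_one hx0.le hx1, tsum_mul_left, hS2]
  have h1 : (1:ℝ) - x ≠ 0 := by linarith
  have h2 : (1:ℝ) - x^μ ≠ 0 := by linarith
  field_simp
  ring

lemma cast_mySigma (ℓ r q e : ℕ) (hq : q.Prime) :
    ((mySigma r (q^e) : ZMod ℓ)) = ∑ i ∈ Finset.range (e+1), ((q : ZMod ℓ)^r)^i := by
  rw [mySigma, Nat.sum_divisors_prime_pow hq]
  push_cast
  exact Finset.sum_congr rfl fun i _ => by rw [← pow_mul, ← pow_mul, mul_comm]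


lemma sigma_ell_pow (ℓ : ℕ) (hℓ : ℓ.Prime) (r : ℕ) (hr : 1 ≤ r) (e : ℕ) :
    ¬ ℓ ∣ mySigma r (ℓ^e) := by
  haveI : Fact ℓ.Prime := ⟨hℓ⟩
  rw [← ZMod.natCast_eq_zero_iff, cast_mySigma ℓ r ℓ e hℓ]
  rw [ZMod.natCast_self, zero_pow (by omega : r ≠ 0)]
  have : ∑ i ∈ Finset.range (e+1), (0 : ZMod ℓ)^i = 1 := by
    rw [Finset.sum_eq_single 0]
    · simp
    · intro i _ hi; exact zero_pow hi
    · simp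
  rw [this]; exact one_ne_zero


lemma mu_char (ℓ : ℕ) (hℓ : ℓ.Prime) (r q : ℕ) (hq : q.Prime) (hne : q ≠ ℓ) (e : ℕ) :
    (ℓ ∣ mySigma r (q^e)) ↔ (mu ℓ r q ∣ e + 1) := by
  haveI : Fact ℓ.Prime := ⟨hℓ⟩
  set t : ZMod ℓ := (q : ZMod ℓ)^r with ht
  rw [← ZMod.natCast_eq_zero_iff, cast_mySigma ℓ r q e hq, ← ht]
  by_cases h1 : t = 1
  · have : mu ℓ r q = ℓ := by
      rw [mu, if_pos]; rw [← ht, h1, orderOf_one]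
    rw [this, h1]
    simp only [one_pow, Finset.sum_const, Finset.card_range, nsmul_eq_mul, mul_one]
    rw [show ((e+1 : ℕ) : ZMod ℓ) = ((e:ℕ) : ZMod ℓ) + 1 by push_cast; ring] at *
    constructor
    · intro h
      have := (ZMod.natCast_eq_zero_iff (e+1) ℓ).mp (by push_cast; exact h)
      exact this
    · intro h
      have := (ZMod.natCast_eq_zero_iff (e+1) ℓ).mpr h
      push_cast at this; exact this
  · have hmu : mu ℓ r q = orderOf t := by
      rw [mu, if_neg, ht]
      rw [← ht]; intro h; exact h1 (orderOf_eq_one_iff.mp h)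
    rw [hmu, geom_sum_eq h1 (e+1)]
    rw [div_eq_zero_iff]
    have h2 : t - 1 ≠ 0 := sub_ne_zero.mpr h1
    simp only [h2, or_false]
    rw [sub_eq_zero, orderOf_dvd_iff_pow_eq_one]


lemma mu_pos (ℓ : ℕ) (hℓ : ℓ.Prime) (r q : ℕ) (hq : q.Prime) (hne : q ≠ ℓ) :
    1 ≤ mu ℓ r q := by
  rw [mu]
  split
  · exact hℓ.one_lt.le
  · rename_i h
    haveI : Fact ℓ.Prime := ⟨hℓ⟩
    have ht0 : ((q : ZMod ℓ)^r) ≠ 0 := by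
      apply pow_ne_zero
      intro h0
      exact hne ((Nat.prime_dvd_prime_iff_eq hℓ hq).mp
        ((ZMod.natCast_eq_zero_iff q ℓ).mp h0)).symm
    have : IsOfFinOrder ((q : ZMod ℓ)^r) := by
      apply isOfFinOrder_iff_pow_eq_one.mpr
      exact ⟨ℓ - 1, Nat.sub_pos_of_lt hℓ.one_lt, ZMod.pow_card_sub_one_eq_one ht0⟩
    exact orderOf_pos_iff.mpr this

theorem stmt10 (ℓ : ℕ) (hℓ : ℓ.Prime) (hodd : Odd ℓ) (r : ℕ) (hr : 1 ≤ r)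
    (s : ℝ) (hs : 1 < s) :
    Summable (fun n : {n : ℕ // 0 < n ∧ ¬ ℓ ∣ mySigma r n} => ((n : ℕ) : ℝ) ^ (-s)) ∧
    Multipliable (fun q : {q : ℕ // q.Prime ∧ q ≠ ℓ} =>
      (1 - ((q : ℕ) : ℝ) ^ (-(((mu ℓ r q : ℝ)) - 1) * s)) /
        ((1 - ((q : ℕ) : ℝ) ^ (-s)) * (1 - ((q : ℕ) : ℝ) ^ (-(mu ℓ r q : ℝ) * s)))) ∧
    (∑' n : {n : ℕ // 0 < n ∧ ¬ ℓ ∣ mySigma r n}, ((n : ℕ) : ℝ) ^ (-s)) =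
      (1 - (ℓ : ℝ) ^ (-s))⁻¹ *
        ∏' q : {q : ℕ // q.Prime ∧ q ≠ ℓ},
          (1 - ((q : ℕ) : ℝ) ^ (-(((mu ℓ r q : ℝ)) - 1) * s)) /
            ((1 - ((q : ℕ) : ℝ) ^ (-s)) * (1 - ((q : ℕ) : ℝ) ^ (-(mu ℓ r q : ℝ) * s))) := by
  haveI : Fact ℓ.Prime := ⟨hℓ⟩
  set f : ℕ → ℝ := fun n => if ℓ ∣ mySigma r n then 0 else (n:ℝ)^(-s) with hf
  have hf₀ : f 0 = 0 := by
    simp only [hf]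
    rw [if_pos]
    rw [mySigma]; simp
  have hf₁ : f 1 = 1 := by
    simp only [hf]
    rw [if_neg, Nat.cast_one, Real.one_rpow]
    rw [mySigma]; simp [Nat.dvd_one, hℓ.ne_one]
  have hmulσ : ∀ {m n : ℕ}, Nat.Coprime m n → mySigma r (m*n) = mySigma r m * mySigma r n := by
    intro m n h
    have hms : ∀ k, mySigma r k = ArithmeticFunction.sigma r k := by
      intro k; rw [mySigma, ArithmeticFunction.sigma_apply]
    rw [hms, hms, hms]
    exact ArithmeticFunction.isMultiplicative_sigma.map_mul_of_coprime h
  have hmul : ∀ {m n : ℕ}, Nat.Coprime m n → f (m*n) = f m * f n := by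
    intro m n h
    simp only [hf, hmulσ h]
    rw [Nat.cast_mul, Real.mul_rpow (Nat.cast_nonneg m) (Nat.cast_nonneg n)]
    by_cases h1 : ℓ ∣ mySigma r m <;> by_cases h2 : ℓ ∣ mySigma r n <;>
      simp [hℓ.dvd_mul, h1, h2]
  have hsum : Summable (fun n => ‖f n‖) := by
    apply Summable.of_nonneg_of_le (fun n => norm_nonneg _) (fun n => ?_)
      (Real.summable_nat_rpow.mpr (by linarith : -s < -1))
    simp only [hf, Real.norm_eq_abs]
    split
    · rw [abs_zero]; positivity
    · rw [abs_of_nonneg (Real.rpow_nonneg (Nat.cast_nonneg _) _)]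
  have hsummf : Summable f := hsum.of_norm
  have hP := EulerProduct.eulerProduct_hasProd hf₁ hmul hsum hf₀
  -- sum over subtype
  have hsuppf : Function.support f ⊆ {n : ℕ | 0 < n ∧ ¬ ℓ ∣ mySigma r n} := by
    intro n hn
    simp only [Function.mem_support, hf] at hn
    split_ifs at hn with hd
    · exact absurd rfl hn
    refine ⟨?_, hd⟩
    rcases Nat.eq_zero_or_pos n with rfl | h
    · rw [Nat.cast_zero, Real.zero_rpow (by linarith : -s ≠ 0)] at hn
      exact absurd rfl hn
    · exact h
  have hsub : Summable (fun n : {n : ℕ // 0 < n ∧ ¬ ℓ ∣ mySigma r n} => ((n:ℕ):ℝ)^(-s)) := by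
    refine (hsummf.subtype {n : ℕ | 0 < n ∧ ¬ ℓ ∣ mySigma r n}).congr fun x => ?_
    simp only [Function.comp_apply, hf]
    rw [if_neg x.2.2]
  have htsum_eq : (∑' n : {n : ℕ // 0 < n ∧ ¬ ℓ ∣ mySigma r n}, ((n:ℕ):ℝ)^(-s)) = ∑' n, f n := by
    rw [← tsum_subtype_eq_of_support_subset hsuppf]
    apply tsum_congr
    rintro ⟨n, hn⟩
    simp only [hf]
    rw [if_neg hn.2]
  -- rpow facts
  have hrpow : ∀ (p : ℕ), ∀ e : ℕ, ((p^e : ℕ) : ℝ)^(-s) = ((p:ℝ)^(-s))^e := by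
    intro p e
    rw [Nat.cast_pow, ← Real.rpow_natCast ((p:ℝ)) e, ← Real.rpow_mul (Nat.cast_nonneg p),
        mul_comm, Real.rpow_mul (Nat.cast_nonneg p), Real.rpow_natCast]
  have hx : ∀ p : ℕ, p.Prime → 0 < (p:ℝ)^(-s) ∧ (p:ℝ)^(-s) < 1 := by
    intro p hp
    refine ⟨Real.rpow_pos_of_pos (by exact_mod_cast hp.pos) _, ?_⟩
    exact Real.rpow_lt_one_of_one_lt_of_neg (by exact_mod_cast hp.one_lt) (by linarith)
  set F : Nat.Primes → ℝ := fun p => ∑' e : ℕ, f ((p : ℕ) ^ e) with hF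
  have hFℓ : F ⟨ℓ, hℓ⟩ = (1 - (ℓ:ℝ)^(-s))⁻¹ := by
    simp only [hF]
    have step : ∀ e : ℕ, f (ℓ ^ e) = ((ℓ:ℝ)^(-s))^e := by
      intro e
      simp only [hf]
      rw [if_neg (sigma_ell_pow ℓ hℓ r hr e)]
      exact hrpow ℓ e
    rw [tsum_congr step, tsum_geometric_of_lt_one (hx ℓ hℓ).1.le (hx ℓ hℓ).2]
  have hFq : ∀ (q : ℕ) (hq : q.Prime), q ≠ ℓ →
      F ⟨q, hq⟩ = (1 - (q:ℝ)^(-((mu ℓ r q : ℝ) - 1) * s)) /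
        ((1 - (q:ℝ)^(-s)) * (1 - (q:ℝ)^(-(mu ℓ r q : ℝ) * s))) := by
    intro q hq hne
    obtain ⟨ν, hν⟩ : ∃ ν, mu ℓ r q = ν + 1 :=
      ⟨mu ℓ r q - 1, by have := mu_pos ℓ hℓ r q hq hne; omega⟩
    have hx1 := hx q hq
    have step : ∀ e : ℕ, f (q^e) = (if (ν+1) ∣ (e+1) then (0:ℝ) else ((q:ℝ)^(-s))^e) := by
      intro e
      simp only [hf]
      have hiff := mu_char ℓ hℓ r q hq hne e
      rw [hν] at hiff
      by_cases hd : (ν+1) ∣ (e+1)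
      · rw [if_pos (hiff.mpr hd), if_pos hd]
      · rw [if_neg (fun hc => hd (hiff.mp hc)), if_neg hd]
        exact hrpow q e
    simp only [hF]
    rw [tsum_congr step, lemD _ hx1.1 hx1.2 ν]
    have e1 : ((q:ℝ)^(-s))^ν = (q:ℝ)^(-((mu ℓ r q:ℝ)-1)*s) := by
      rw [← Real.rpow_natCast ((q:ℝ)^(-s)) ν, ← Real.rpow_mul (Nat.cast_nonneg q)]
      congr 1
      rw [hν]; push_cast; ring
    have e2 : ((q:ℝ)^(-s))^(ν+1) = (q:ℝ)^(-(mu ℓ r q:ℝ)*s) := by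
      rw [← Real.rpow_natCast ((q:ℝ)^(-s)) (ν+1), ← Real.rpow_mul (Nat.cast_nonneg q)]
      congr 1
      rw [hν]; push_cast; ring
    rw [e1, e2]
  -- second Euler product with ℓ-part killed
  set g : ℕ → ℝ := fun n => if ℓ ∣ n then 0 else f n with hg
  have hg₀ : g 0 = 0 := by simp [hg]
  have hg₁ : g 1 = 1 := by
    simp only [hg]
    rw [if_neg (fun h => hℓ.ne_one (Nat.dvd_one.mp h))]
    exact hf₁
  have hgmul : ∀ {m n : ℕ}, Nat.Coprime m n → g (m*n) = g m * g n := by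
    intro m n h
    simp only [hg]
    by_cases h1 : ℓ ∣ m <;> by_cases h2 : ℓ ∣ n <;>
      simp [hℓ.prime.dvd_mul, h1, h2, hmul h]
  have hgsum : Summable (fun n => ‖g n‖) := by
    apply Summable.of_nonneg_of_le (fun n => norm_nonneg _) (fun n => ?_) hsum
    simp only [hg]
    split <;> simp [norm_nonneg]
  have hPg := EulerProduct.eulerProduct_hasProd hg₁ hgmul hgsum hg₀
  set G : Nat.Primes → ℝ := fun p => ∑' e : ℕ, g ((p : ℕ) ^ e) with hG
  set b : Nat.Primes := ⟨ℓ, hℓ⟩ with hb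
  have hGb : G b = 1 := by
    simp only [hG, hb]
    rw [tsum_eq_single 0 ?_]
    · simpa [hg] using hg₁
    · intro e he
      simp only [hg]
      rw [if_pos (dvd_pow_self ℓ he)]
  have hGF : ∀ p : Nat.Primes, p ≠ b → G p = F p := by
    intro p hp
    simp only [hG, hF]
    refine tsum_congr fun e => ?_
    simp only [hg]
    rw [if_neg]
    intro hd
    rcases Nat.eq_zero_or_pos e with rfl | he
    · rw [pow_zero] at hd; exact hℓ.ne_one (Nat.dvd_one.mp hd)
    · have : ℓ = (p : ℕ) := (Nat.prime_dvd_prime_iff_eq hℓ p.2).mp (hℓ.dvd_of_dvd_pow hd)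
      exact hp (Subtype.ext this.symm)
  -- HasProd over the complement of {b}
  have hsupp : Function.mulSupport G ⊆ ({b} : Set Nat.Primes)ᶜ := by
    intro p hp h1
    rw [Set.mem_singleton_iff.mp h1] at hp
    exact hp hGb
  have hcompl : HasProd (G ∘ ((↑) : ↑(({b} : Set Nat.Primes)ᶜ) → Nat.Primes)) (∑' n, g n) := by
    rw [hasProd_subtype_iff_mulIndicator, Set.mulIndicator_eq_self.mpr hsupp]
    exact hPg
  have hcomplF : HasProd (F ∘ ((↑) : ↑(({b} : Set Nat.Primes)ᶜ) → Nat.Primes)) (∑' n, g n) := by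
    refine HasProd.congr_fun hcompl ?_
    intro p
    exact (hGF p.1 p.2).symm
  have hsingle : HasProd (F ∘ ((↑) : ↑({b} : Set Nat.Primes) → Nat.Primes)) (F b) := by
    have : ∀ (x : ↑({b} : Set Nat.Primes)), x ≠ ⟨b, rfl⟩ →
        (F ∘ ((↑) : ↑({b} : Set Nat.Primes) → Nat.Primes)) x = 1 := by
      intro x hx
      exact absurd (Subtype.ext (Set.mem_singleton_iff.mp x.2)) hx
    simpa using hasProd_single (⟨b, rfl⟩ : ↑({b} : Set Nat.Primes)) this
  have hFsplit : HasProd F (F b * ∑' n, g n) := hsingle.mul_compl hcomplF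
  have hkey : (∑' n, f n) = F b * ∑' n, g n := hP.unique hFsplit
  let E : {q : ℕ // q.Prime ∧ q ≠ ℓ} ≃ ↑(({b} : Set Nat.Primes)ᶜ) :=
    { toFun := fun q => ⟨⟨q.1, q.2.1⟩, by
        exact fun h => q.2.2 (congrArg Subtype.val (Set.mem_singleton_iff.mp h))⟩
      invFun := fun p => ⟨(p.1 : ℕ), p.1.2, by
        exact fun h => p.2 (Set.mem_singleton_iff.mpr (Subtype.ext h))⟩
      left_inv := fun q => rfl
      right_inv := fun p => rfl }
  set T : {q : ℕ // q.Prime ∧ q ≠ ℓ} → ℝ := fun q =>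
      (1 - ((q : ℕ) : ℝ) ^ (-(((mu ℓ r q : ℝ)) - 1) * s)) /
        ((1 - ((q : ℕ) : ℝ) ^ (-s)) * (1 - ((q : ℕ) : ℝ) ^ (-(mu ℓ r q : ℝ) * s))) with hT
  have hTE : T = (F ∘ ((↑) : ↑(({b} : Set Nat.Primes)ᶜ) → Nat.Primes)) ∘ E := by
    funext q
    simp only [hT, Function.comp_apply]
    exact (hFq q.1 q.2.1 q.2.2).symm
  have hmulT : Multipliable T := by
    rw [hTE]
    exact E.multipliable_iff.mpr hcomplF.multipliable
  have hTprod : (∏' q, T q) = ∏' p : ↑(({b} : Set Nat.Primes)ᶜ), F p := by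
    rw [hTE]
    exact E.tprod_eq _
  refine ⟨hsub, hmulT, ?_⟩
  rw [htsum_eq, hkey, hFℓ, hTprod]
  congr 1
  exact hcomplF.tprod_eq.symm
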